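/- (Coefficient bound for truncated SVD frame projection.) With notation as above, the regularized coefficient vector x^ε = ∑_{σ_k > ε} (⟨f, ξ_k⟩/σ_k) v_k satisfies ‖x^ε‖ ≤ inf{ ε^{−1/2} ‖f − T_N z‖ + ‖z‖ : z ∈ ℂᴺ } for every f ∈ H. -/

import Mathlib

open scoped InnerProductSpace

lemma aux_norm_sum {E : Type*} [NormedAddCommGroup E] [InnerProductSpace ℂ E] {ι : Type*}
    {v : ι → E} (hv : Orthonormal ℂ v) (s : Finset ι) (c : ι → ℂ) :
    ‖∑ i ∈ s, c i • v i‖ ^ 2 = ∑ i ∈ s, ‖c i‖ ^ 2 := by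
  classical
  have h : ⟪∑ i ∈ s, c i • v i, ∑ i ∈ s, c i • v i⟫_ℂ
      = ∑ i ∈ s, (starRingEnd ℂ) (c i) * c i := by
    rw [sum_inner]
    refine Finset.sum_congr rfl fun i hi => ?_
    rw [inner_smul_left, hv.inner_right_sum c hi]
  have h2 : (‖∑ i ∈ s, c i • v i‖ : ℝ) ^ 2
      = Complex.re (⟪∑ i ∈ s, c i • v i, ∑ i ∈ s, c i • v i⟫_ℂ) :=
    (norm_sq_eq_re_inner (𝕜 := ℂ) _)
  rw [h2, h, Complex.re_sum]
  refine Finset.sum_congr rfl fun i _ => ?_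
  rw [RCLike.conj_mul]
  norm_cast

/-- Coefficient bound for the truncated SVD frame projection: the regularized coefficient
vector `x^ε = ∑_{σ_k>ε} σ_k⁻¹ ⟨f, ξ_k⟩ v_k` satisfies
`‖x^ε‖ ≤ inf{ ε^{−1/2} ‖f − T_N z‖ + ‖z‖ : z ∈ ℂᴺ }`. -/
theorem stmt_14 {H : Type*} [NormedAddCommGroup H] [InnerProductSpace ℂ H]
    {N : ℕ} (φ : Fin N → H) (hφ : LinearIndependent ℂ φ)
    (T : EuclideanSpace ℂ (Fin N) →ₗ[ℂ] H)
    (hT : ∀ x : EuclideanSpace ℂ (Fin N), T x = ∑ n, x n • φ n)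
    (G : Matrix (Fin N) (Fin N) ℂ) (hGdef : ∀ n m, G n m = ⟪φ n, φ m⟫_ℂ)
    (σ : Fin N → ℝ) (hσ : ∀ k, 0 < σ k)
    (v : Fin N → EuclideanSpace ℂ (Fin N)) (hv : Orthonormal ℂ v)
    (heig : ∀ k, Matrix.toEuclideanCLM (𝕜 := ℂ) G (v k) = (σ k : ℂ) • v k)
    (ξ : Fin N → H) (hξ : ∀ k, ξ k = ∑ n, v k n • φ n)
    (ε : ℝ) (hε : 0 < ε) (f : H) :
    ∀ z : EuclideanSpace ℂ (Fin N),
      ‖∑ k ∈ Finset.univ.filter (fun k => ε < σ k),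
          ((σ k : ℂ)⁻¹ * ⟪ξ k, f⟫_ℂ) • v k‖ ≤
        (Real.sqrt ε)⁻¹ * ‖f - T z‖ + ‖z‖ := by
  classical
  intro z
  set S : Finset (Fin N) := Finset.univ.filter (fun k => ε < σ k) with hS
  set g : H := f - T z with hg
  -- key identity ⟪T w, ξ k⟫ = σ k ⟪w, v k⟫
  have key : ∀ (w : EuclideanSpace ℂ (Fin N)) k, ⟪T w, ξ k⟫_ℂ = (σ k : ℂ) * ⟪w, v k⟫_ℂ := by
    intro w k
    have hmul : ∀ m, (∑ n, G m n * v k n) = (σ k : ℂ) * v k m := by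
      intro m
      have h1 : Matrix.toEuclideanCLM (𝕜 := ℂ) G (v k) m = ((σ k : ℂ) • v k) m := by
        rw [heig k]
      have h2 : Matrix.toEuclideanCLM (𝕜 := ℂ) G (v k) m = (G.mulVec (fun n => v k n)) m := by
        have := congrFun (Matrix.ofLp_toEuclideanCLM G (v k)) m
        simpa [Matrix.toLin'_apply] using this
      rw [h2] at h1
      simpa [Matrix.mulVec, dotProduct] using h1
    rw [hT, hξ, sum_inner]
    calc ∑ m, ⟪w m • φ m, ∑ n, v k n • φ n⟫_ℂ
        = ∑ m, (starRingEnd ℂ) (w m) * ∑ n, v k n * ⟪φ m, φ n⟫_ℂ := by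
          refine Finset.sum_congr rfl fun m _ => ?_
          rw [inner_smul_left, inner_sum]
          simp [inner_smul_right]
      _ = ∑ m, (starRingEnd ℂ) (w m) * ((σ k : ℂ) * v k m) := by
          refine Finset.sum_congr rfl fun m _ => ?_
          rw [← hmul m]
          congr 1
          refine Finset.sum_congr rfl fun n _ => ?_
          rw [hGdef m n, mul_comm]
      _ = (σ k : ℂ) * ⟪w, v k⟫_ℂ := by
          rw [PiLp.inner_apply, Finset.mul_sum]
          refine Finset.sum_congr rfl fun m _ => ?_
          simp [RCLike.inner_apply]; ring
  have hTv : ∀ k, T (v k) = ξ k := fun k => by rw [hT, hξ]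
  have hξξ : ∀ k j, ⟪ξ k, ξ j⟫_ℂ = if k = j then (σ j : ℂ) else 0 := by
    intro k j
    rw [← hTv k, key (v k) j, orthonormal_iff_ite.mp hv]
    split <;> simp
  -- orthonormal family u k = (√σ k)⁻¹ • ξ k
  set u : Fin N → H := fun k => ((Real.sqrt (σ k) : ℂ))⁻¹ • ξ k with hu_def
  have hsq : ∀ k, ((Real.sqrt (σ k) : ℂ)) * ((Real.sqrt (σ k) : ℂ)) = (σ k : ℂ) := by
    intro k
    norm_cast
    exact Real.mul_self_sqrt (hσ k).le
  have hsne : ∀ k, ((Real.sqrt (σ k) : ℂ)) ≠ 0 := by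
    intro k
    exact_mod_cast (Real.sqrt_pos.mpr (hσ k)).ne'
  have hu : Orthonormal ℂ u := by
    rw [orthonormal_iff_ite]
    intro i j
    simp only [hu_def, inner_smul_left, inner_smul_right, map_inv₀, Complex.conj_ofReal, hξξ]
    by_cases h : i = j
    · subst h
      simp only [if_pos rfl]
      rw [← hsq i]
      field_simp
      simp only [↓reduceIte]
      exact div_self (pow_ne_zero 2 (hsne i))
    · simp [h]
  -- coefficient split
  have hcoef : ∀ k ∈ S, ((σ k : ℂ)⁻¹ * ⟪ξ k, f⟫_ℂ)
      = (σ k : ℂ)⁻¹ * ⟪ξ k, g⟫_ℂ + ⟪v k, z⟫_ℂ := by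
    intro k _
    have h1 : ⟪ξ k, f⟫_ℂ = ⟪ξ k, g⟫_ℂ + ⟪ξ k, T z⟫_ℂ := by
      rw [← inner_add_right]
      congr 1
      simp [hg]
    have h2 : ⟪ξ k, T z⟫_ℂ = (σ k : ℂ) * ⟪v k, z⟫_ℂ := by
      rw [← inner_conj_symm, key z k, map_mul, Complex.conj_ofReal, inner_conj_symm]
    rw [h1, h2, mul_add, ← mul_assoc, inv_mul_cancel₀, one_mul]
    exact_mod_cast (hσ k).ne'
  have hsplit : ∑ k ∈ S, ((σ k : ℂ)⁻¹ * ⟪ξ k, f⟫_ℂ) • v k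
      = (∑ k ∈ S, ((σ k : ℂ)⁻¹ * ⟪ξ k, g⟫_ℂ) • v k) + ∑ k ∈ S, ⟪v k, z⟫_ℂ • v k := by
    rw [← Finset.sum_add_distrib]
    exact Finset.sum_congr rfl fun k hk => by rw [hcoef k hk, add_smul]
  -- bound on B
  have hBle : ‖∑ k ∈ S, ⟪v k, z⟫_ℂ • v k‖ ≤ ‖z‖ := by
    have h := hv.sum_inner_products_le (s := S) z
    rw [← aux_norm_sum hv S (fun k => ⟪v k, z⟫_ℂ)] at h
    have h' := Real.sqrt_le_sqrt h
    rwa [Real.sqrt_sq (norm_nonneg _), Real.sqrt_sq (norm_nonneg _)] at h'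
  -- bound on A
  have hAle : ‖∑ k ∈ S, ((σ k : ℂ)⁻¹ * ⟪ξ k, g⟫_ℂ) • v k‖ ≤ (Real.sqrt ε)⁻¹ * ‖g‖ := by
    have hug : ∀ k, ‖⟪u k, g⟫_ℂ‖ ^ 2 = (σ k)⁻¹ * ‖⟪ξ k, g⟫_ℂ‖ ^ 2 := by
      intro k
      simp only [hu_def, inner_smul_left, map_inv₀, Complex.conj_ofReal, norm_mul, mul_pow,
        norm_inv, Complex.norm_real]
      congr 1
      rw [Real.norm_of_nonneg (Real.sqrt_nonneg _), inv_pow, Real.sq_sqrt (hσ k).le]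
    have hbes : ∑ k ∈ S, (σ k)⁻¹ * ‖⟪ξ k, g⟫_ℂ‖ ^ 2 ≤ ‖g‖ ^ 2 := by
      have h := hu.sum_inner_products_le (s := S) g
      calc ∑ k ∈ S, (σ k)⁻¹ * ‖⟪ξ k, g⟫_ℂ‖ ^ 2
          = ∑ k ∈ S, ‖⟪u k, g⟫_ℂ‖ ^ 2 := (Finset.sum_congr rfl fun k _ => (hug k).symm)
        _ ≤ ‖g‖ ^ 2 := h
    have hA2 : ‖∑ k ∈ S, ((σ k : ℂ)⁻¹ * ⟪ξ k, g⟫_ℂ) • v k‖ ^ 2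
        ≤ ε⁻¹ * ‖g‖ ^ 2 := by
      rw [aux_norm_sum hv S (fun k => (σ k : ℂ)⁻¹ * ⟪ξ k, g⟫_ℂ)]
      calc ∑ k ∈ S, ‖(σ k : ℂ)⁻¹ * ⟪ξ k, g⟫_ℂ‖ ^ 2
          ≤ ∑ k ∈ S, ε⁻¹ * ((σ k)⁻¹ * ‖⟪ξ k, g⟫_ℂ‖ ^ 2) := by
            refine Finset.sum_le_sum ?_
            intro k hk
            have hkε : ε < σ k := by
              simpa [hS] using (Finset.mem_filter.mp hk).2
            have hb : ‖(σ k : ℂ)⁻¹‖ ^ 2 = (σ k)⁻¹ * (σ k)⁻¹ := by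
              rw [norm_inv, Complex.norm_real, Real.norm_of_nonneg (hσ k).le]
              ring
            rw [norm_mul, mul_pow, hb]
            have h1 : (σ k)⁻¹ ≤ ε⁻¹ := inv_anti₀ hε hkε.le
            have h2 : (0:ℝ) ≤ (σ k)⁻¹ * ‖⟪ξ k, g⟫_ℂ‖ ^ 2 :=
              mul_nonneg (inv_nonneg.mpr (hσ k).le) (sq_nonneg _)
            calc (σ k)⁻¹ * (σ k)⁻¹ * ‖⟪ξ k, g⟫_ℂ‖ ^ 2
                = (σ k)⁻¹ * ((σ k)⁻¹ * ‖⟪ξ k, g⟫_ℂ‖ ^ 2) := by ring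
              _ ≤ ε⁻¹ * ((σ k)⁻¹ * ‖⟪ξ k, g⟫_ℂ‖ ^ 2) := mul_le_mul_of_nonneg_right h1 h2
        _ = ε⁻¹ * ∑ k ∈ S, (σ k)⁻¹ * ‖⟪ξ k, g⟫_ℂ‖ ^ 2 := by rw [Finset.mul_sum]
        _ ≤ ε⁻¹ * ‖g‖ ^ 2 := mul_le_mul_of_nonneg_left hbes (by positivity)
    have hrhs : ε⁻¹ * ‖g‖ ^ 2 = ((Real.sqrt ε)⁻¹ * ‖g‖) ^ 2 := by
      rw [mul_pow, ← Real.sqrt_inv, Real.sq_sqrt (by positivity)]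
    rw [hrhs] at hA2
    have h' := Real.sqrt_le_sqrt hA2
    rwa [Real.sqrt_sq (norm_nonneg _), Real.sqrt_sq (by positivity)] at h'
  rw [hsplit]
  exact (norm_add_le _ _).trans (add_le_add hAle hBle)
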